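/- Let λ be a weak composition of n, w ∈ S_n with R(w) row-strict, 2 ≤ k ≤ n, and g_k ∈ B_k(w) with coordinates x_{w(k)w(ℓ)}. Then the commutator g_k X_λ − X_λ g_k applied to e_{w(j)} equals x_{w(k)w(ℓ)} e_{w(k)} if j = r_ℓ for some (k,ℓ) ∈ inv_λ^k(w) (where r_ℓ labels the box directly right of ℓ in R(w)), and equals 0 otherwise. In particular, when k = n, g_n commutes with X_λ. -/

import Mathlib

open Matrix

attribute [local instance] Classical.propDecidable

noncomputable section

/-- Label of the box in row `i` (0-indexed from the top), column `j` (0-indexed) of the base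
filling of the weak composition `lam`: columns filled left to right, each column bottom to top,
labels `1,…,n`. -/
def baseLabel (lam : List ℕ) (i j : ℕ) : ℕ :=
  (∑ i' ∈ Finset.range lam.length, min (lam.getD i' 0) j) +
    ((Finset.Ico i lam.length).filter (fun i' => j < lam.getD i' 0)).card

def IsBox (lam : List ℕ) (i j : ℕ) : Prop :=
  i < lam.length ∧ j < lam.getD i 0

/-- The nilpotent matrix `X_λ = Σ E_{ℓ r}` over pairs where the box labeled `r` is directly right
of the box labeled `ℓ` in the base filling (labels are 1-indexed; matrix indices 0-indexed). -/
def Xlam (n : ℕ) (lam : List ℕ) : Matrix (Fin n) (Fin n) ℂ :=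
  fun ℓ r => if (∃ i j, IsBox lam i (j+1) ∧ baseLabel lam i j = (ℓ : ℕ) + 1 ∧
      baseLabel lam i (j+1) = (r : ℕ) + 1) then 1 else 0

def IsFullFlag (n : ℕ) (V : ℕ → Submodule ℂ (Fin n → ℂ)) : Prop :=
  V 0 = ⊥ ∧ (∀ i, V i ≤ V (i+1)) ∧ ∀ i, i ≤ n → Module.finrank ℂ (V i) = i

def InHess (n : ℕ) (X : Matrix (Fin n) (Fin n) ℂ) (h : ℕ → ℕ)
    (V : ℕ → Submodule ℂ (Fin n → ℂ)) : Prop :=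
  ∀ i, i ≤ n → ∀ v ∈ V i, X.mulVec v ∈ V (h i)

/-- The flag `wE_•`, whose `k`-th space is spanned by `e_{w(1)},…,e_{w(k)}` (0-indexed). -/
def permFlag (n : ℕ) (w : Equiv.Perm (Fin n)) : ℕ → Submodule ℂ (Fin n → ℂ) :=
  fun k => Submodule.span ℂ {v | ∃ j : Fin n, (j : ℕ) < k ∧ v = Pi.single (w j) (1 : ℂ)}

/-- The flag whose `k`-th space is spanned by the first `k` columns of `g`. -/
def matFlag (n : ℕ) (g : Matrix (Fin n) (Fin n) ℂ) : ℕ → Submodule ℂ (Fin n → ℂ) :=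
  fun k => Submodule.span ℂ {c | ∃ j : Fin n, (j : ℕ) < k ∧ c = fun a => g a j}

def permMat (n : ℕ) (σ : Equiv.Perm (Fin n)) : Matrix (Fin n) (Fin n) ℂ :=
  fun a b => if σ b = a then 1 else 0

def invSet (n : ℕ) (w : Equiv.Perm (Fin n)) : Finset (Fin n × Fin n) :=
  Finset.univ.filter (fun p => p.2 < p.1 ∧ w p.1 < w p.2)

def blen (n : ℕ) (w : Equiv.Perm (Fin n)) : ℕ := (invSet n w).card

open Fin.NatCast in
/-- `v = s_i s_{i+1} ⋯ s_{n-1}` (0-indexed simple transpositions `swap j (j+1)`). -/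
def vPerm (n : ℕ) (i : ℕ) : Equiv.Perm (Fin (n+1)) :=
  ((List.Ico i n).map (fun j : ℕ => Equiv.swap (j : Fin (n+1)) ((j+1 : ℕ) : Fin (n+1)))).prod

/-- `R(w)` is row-strict: the entry in the box labeled `m` of the base filling is `w⁻¹(m)`,
so entry `p` (0-indexed) occupies the box whose base label is `w(p)+1`. -/
def RowStrictT (n : ℕ) (lam : List ℕ) (w : Equiv.Perm (Fin n)) : Prop :=
  ∀ i j, IsBox lam i (j+1) → ∀ p q : Fin n,
    (w p : ℕ) + 1 = baseLabel lam i j → (w q : ℕ) + 1 = baseLabel lam i (j+1) → p < q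

def HStrictT (n : ℕ) (lam : List ℕ) (h : ℕ → ℕ) (w : Equiv.Perm (Fin n)) : Prop :=
  ∀ i j, IsBox lam i (j+1) → ∀ p q : Fin n,
    (w p : ℕ) + 1 = baseLabel lam i j → (w q : ℕ) + 1 = baseLabel lam i (j+1) →
      (p : ℕ) + 1 ≤ h ((q : ℕ) + 1)

/-- `(k,ℓ)` is a Hessenberg inversion of `R(w)` (entries 0-indexed: values are index+1). -/
def HessInvT (n : ℕ) (lam : List ℕ) (h : ℕ → ℕ) (w : Equiv.Perm (Fin n)) (k ℓ : Fin n) : Prop :=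
  ℓ < k ∧ ∃ ik jk il jl : ℕ, IsBox lam ik jk ∧ IsBox lam il jl ∧
    baseLabel lam ik jk = (w k : ℕ) + 1 ∧ baseLabel lam il jl = (w ℓ : ℕ) + 1 ∧
    (jk < jl ∨ (jk = jl ∧ il < ik)) ∧
    (∀ r : Fin n, IsBox lam il (jl + 1) → (w r : ℕ) + 1 = baseLabel lam il (jl + 1) →
      (k : ℕ) + 1 ≤ h ((r : ℕ) + 1))

/-- Springer inversions: Hessenberg inversions for `h = (0,1,…,n-1)`, i.e. `h(i) = i - 1`. -/
def SpringerInvT (n : ℕ) (lam : List ℕ) (w : Equiv.Perm (Fin n)) (k ℓ : Fin n) : Prop :=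
  HessInvT n lam (fun m => m - 1) w k ℓ

/-- The box labeled `b+1` is directly right of the box labeled `a+1` in the base filling. -/
def RightNbr (lam : List ℕ) (a b : ℕ) : Prop :=
  ∃ i j, IsBox lam i (j+1) ∧ baseLabel lam i j = a + 1 ∧ baseLabel lam i (j+1) = b + 1

/-- The box labeled `a+1` is at the end of its row in the base filling. -/
def EndOfRow (lam : List ℕ) (a : ℕ) : Prop :=
  ∃ i j, IsBox lam i j ∧ ¬ IsBox lam i (j+1) ∧ baseLabel lam i j = a + 1

def IsUpperUnip (n : ℕ) (g : Matrix (Fin n) (Fin n) ℂ) : Prop :=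
  (∀ i, g i i = 1) ∧ ∀ i j : Fin n, j < i → g i j = 0

/-- `U_i`: upper unipotent matrices whose off-diagonal entries are supported in row `i`. -/
def InUi (n : ℕ) (i : Fin n) (g : Matrix (Fin n) (Fin n) ℂ) : Prop :=
  IsUpperUnip n g ∧ ∀ a b : Fin n, a ≠ b → g a b ≠ 0 → a = i

/-- `U_0`: upper unipotent matrices of `GL_n` embedded in `GL_{n+1}` (last column trivial). -/
def InU0 (n : ℕ) (g : Matrix (Fin (n+1)) (Fin (n+1)) ℂ) : Prop :=
  IsUpperUnip (n+1) g ∧ ∀ a : Fin (n+1), a ≠ Fin.last n → g a (Fin.last n) = 0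

/-- The element of `B_k(w)` with coordinates `x`: it sends `e_{w(j)} = X_λ^m e_{w(ℓ)}` to
`e_{w(j)} + x ℓ • X_λ^m e_{w(k)}` for Springer inversions `(k,ℓ)`, fixing all other `e_{w(j)}`. -/
def BkMat (n : ℕ) (lam : List ℕ) (w : Equiv.Perm (Fin n)) (k : Fin n) (x : Fin n → ℂ) :
    Matrix (Fin n) (Fin n) ℂ :=
  1 + ∑ ℓ : Fin n, if SpringerInvT n lam w k ℓ then
      x ℓ • (∑ m ∈ Finset.range n,
        (Xlam n lam) ^ m * Matrix.single (w k) (w ℓ) (1 : ℂ) * ((Xlam n lam)ᵀ) ^ m)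
    else 0

/-- The product `g_n g_{n-1} ⋯ g_2` of elements `g_k ∈ B_k(w)` with coordinates `x k`. -/
def bigB (n : ℕ) (lam : List ℕ) (w : Equiv.Perm (Fin n)) (x : Fin n → Fin n → ℂ) :
    Matrix (Fin n) (Fin n) ℂ :=
  ((List.ofFn (fun k : Fin n => BkMat n lam w k (x k))).reverse).prod

/- Abstract fillings `T : row → column → value` of the diagram of `lam`, values in `[1, n]`. -/

def RowStrictF (lam : List ℕ) (T : ℕ → ℕ → ℕ) : Prop :=
  ∀ i j, IsBox lam i (j+1) → T i j < T i (j+1)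

def HStrictF (lam : List ℕ) (h : ℕ → ℕ) (T : ℕ → ℕ → ℕ) : Prop :=
  ∀ i j, IsBox lam i (j+1) → T i j ≤ h (T i (j+1))

def GoodFilling (lam : List ℕ) (T : ℕ → ℕ → ℕ) : Prop :=
  (∀ i j, IsBox lam i j → 1 ≤ T i j ∧ T i j ≤ lam.sum) ∧
  (∀ m, 1 ≤ m → m ≤ lam.sum → ∃ i j, IsBox lam i j ∧ T i j = m) ∧
  (∀ i j i' j', IsBox lam i j → IsBox lam i' j' → T i j = T i' j' → i = i' ∧ j = j')

def HessInvF (lam : List ℕ) (h : ℕ → ℕ) (T : ℕ → ℕ → ℕ) (k ℓ : ℕ) : Prop :=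
  ℓ < k ∧ ∃ ik jk il jl : ℕ, IsBox lam ik jk ∧ IsBox lam il jl ∧
    T ik jk = k ∧ T il jl = ℓ ∧
    (jk < jl ∨ (jk = jl ∧ il < ik)) ∧
    (IsBox lam il (jl + 1) → k ≤ h (T il (jl + 1)))

/-- `S` is obtained from `T` by sorting each column increasingly from top to bottom:
same column entries (as sets, entries being distinct), with columns of `S` increasing. -/
def ColSortedOf (lam : List ℕ) (T S : ℕ → ℕ → ℕ) : Prop :=
  (∀ j m, (∃ i, IsBox lam i j ∧ T i j = m) ↔ (∃ i, IsBox lam i j ∧ S i j = m)) ∧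
  (∀ i j, IsBox lam i j → IsBox lam (i+1) j → S i j < S (i+1) j)

def IsPartitionL (lam : List ℕ) : Prop :=
  ∀ i i', i ≤ i' → lam.getD i' 0 ≤ lam.getD i 0

def hessInvCount (lam : List ℕ) (h : ℕ → ℕ) (T : ℕ → ℕ → ℕ) : ℕ :=
  (((Finset.range (lam.sum + 1)) ×ˢ (Finset.range (lam.sum + 1))).filter
    (fun p => HessInvF lam h T p.1 p.2)).card

def Hspace (n : ℕ) (h : ℕ → ℕ) : Submodule ℂ (Matrix (Fin n) (Fin n) ℂ) :=
  Submodule.span ℂ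
    {A | ∃ i j : Fin n, (i : ℕ) + 1 ≤ h ((j : ℕ) + 1) ∧ A = Matrix.single i j (1 : ℂ)}

/-- Left-nested iterated bracket `[f (m), [f (m-1), [⋯ [f 1, f 0]]]]`. -/
def iterBr (n : ℕ) (f : ℕ → Matrix (Fin n) (Fin n) ℂ) : ℕ → Matrix (Fin n) (Fin n) ℂ
  | 0 => f 0
  | (m+1) => f (m+1) * iterBr n f m - iterBr n f m * f (m+1)


namespace Stmt12Aux

lemma sum_getD (l : List ℕ) : ∑ i ∈ Finset.range l.length, l.getD i 0 = l.sum := by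
  induction l with
  | nil => simp
  | cons a t ih =>
    simp only [List.length_cons, Finset.sum_range_succ', List.sum_cons]
    simp only [List.getD_cons_succ, List.getD_cons_zero, ih]
    omega

lemma getD_le_sum (l : List ℕ) (i : ℕ) : l.getD i 0 ≤ l.sum := by
  rcases Nat.lt_or_ge i l.length with h | h
  · rw [← sum_getD]
    exact Finset.single_le_sum (f := fun i => l.getD i 0) (fun _ _ => Nat.zero_le _) (Finset.mem_range.mpr h)
  · rw [List.getD_eq_default _ _ h]
    exact Nat.zero_le _

lemma colsum_le (lam : List ℕ) (j : ℕ) :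
    ∑ i' ∈ Finset.range lam.length, min (lam.getD i' 0) j ≤ lam.sum := by
  rw [← sum_getD]
  exact Finset.sum_le_sum (fun i _ => min_le_left _ _)

lemma colsum_mono (lam : List ℕ) {j j' : ℕ} (h : j ≤ j') :
    ∑ i' ∈ Finset.range lam.length, min (lam.getD i' 0) j ≤
      ∑ i' ∈ Finset.range lam.length, min (lam.getD i' 0) j' :=
  Finset.sum_le_sum (fun i _ => by omega)

lemma label_pos (lam : List ℕ) {i j : ℕ} (hb : IsBox lam i j) :
    (∑ i' ∈ Finset.range lam.length, min (lam.getD i' 0) j) < baseLabel lam i j := by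
  unfold baseLabel
  have hi : i ∈ (Finset.Ico i lam.length).filter (fun i' => j < lam.getD i' 0) := by
    simp only [Finset.mem_filter, Finset.mem_Ico]
    exact ⟨⟨le_refl i, hb.1⟩, hb.2⟩
  have := Finset.card_pos.mpr ⟨i, hi⟩
  omega

lemma label_le_colsum (lam : List ℕ) {i j : ℕ} (hb : IsBox lam i j) :
    baseLabel lam i j ≤ ∑ i' ∈ Finset.range lam.length, min (lam.getD i' 0) (j + 1) := by
  unfold baseLabel
  have h1 : ((Finset.Ico i lam.length).filter (fun i' => j < lam.getD i' 0)).card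
      ≤ ((Finset.range lam.length).filter (fun i' => j < lam.getD i' 0)).card := by
    apply Finset.card_le_card
    apply Finset.filter_subset_filter
    intro a ha
    simp only [Finset.mem_Ico] at ha
    simp only [Finset.mem_range]
    omega
  have h2 : ((Finset.range lam.length).filter (fun i' => j < lam.getD i' 0)).card
      = ∑ i' ∈ Finset.range lam.length, (if j < lam.getD i' 0 then 1 else 0) :=
    Finset.card_filter _ _
  have h3 : ∑ i' ∈ Finset.range lam.length, min (lam.getD i' 0) j +
      ∑ i' ∈ Finset.range lam.length, (if j < lam.getD i' 0 then 1 else 0)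
      = ∑ i' ∈ Finset.range lam.length, min (lam.getD i' 0) (j + 1) := by
    rw [← Finset.sum_add_distrib]
    apply Finset.sum_congr rfl
    intro i' _
    split_ifs <;> omega
  omega

lemma label_le_sum (lam : List ℕ) {i j : ℕ} (hb : IsBox lam i j) :
    baseLabel lam i j ≤ lam.sum :=
  (label_le_colsum lam hb).trans (colsum_le lam (j + 1))

lemma label_one_le (lam : List ℕ) {i j : ℕ} (hb : IsBox lam i j) :
    1 ≤ baseLabel lam i j := by
  have := label_pos lam hb
  omega

lemma label_lt_of_col_lt (lam : List ℕ) {i j i' j' : ℕ} (h1 : IsBox lam i j)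
    (h2 : IsBox lam i' j') (hj : j < j') : baseLabel lam i j < baseLabel lam i' j' :=
  (label_le_colsum lam h1).trans_lt (lt_of_le_of_lt (colsum_mono lam hj) (label_pos lam h2))

lemma label_inj (lam : List ℕ) {i j i' j' : ℕ} (h1 : IsBox lam i j) (h2 : IsBox lam i' j')
    (he : baseLabel lam i j = baseLabel lam i' j') : i = i' ∧ j = j' := by
  have hj : j = j' := by
    rcases lt_trichotomy j j' with h | h | h
    · exact absurd he (Nat.ne_of_lt (label_lt_of_col_lt lam h1 h2 h))
    · exact h
    · exact absurd he.symm (Nat.ne_of_lt (label_lt_of_col_lt lam h2 h1 h))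
  subst hj
  refine ⟨?_, rfl⟩
  have key : ∀ a b : ℕ, a < b → IsBox lam a j →
      ((Finset.Ico b lam.length).filter (fun i'' => j < lam.getD i'' 0)).card <
      ((Finset.Ico a lam.length).filter (fun i'' => j < lam.getD i'' 0)).card := by
    intro a b hab hbox
    apply Finset.card_lt_card
    constructor
    · exact Finset.filter_subset_filter _ (Finset.Ico_subset_Ico (le_of_lt hab) le_rfl)
    · intro hsub
      have ha : a ∈ (Finset.Ico a lam.length).filter (fun i'' => j < lam.getD i'' 0) := by
        simp only [Finset.mem_filter, Finset.mem_Ico]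
        exact ⟨⟨le_refl a, hbox.1⟩, hbox.2⟩
      have := hsub ha
      simp only [Finset.mem_filter, Finset.mem_Ico] at this
      omega
  unfold baseLabel at he
  by_contra hne
  rcases lt_or_gt_of_ne hne with h | h
  · have := key i i' h h1; omega
  · have := key i' i h h2; omega

lemma rightNbr_left_unique (lam : List ℕ) {a a' b : ℕ} (h : RightNbr lam a b)
    (h' : RightNbr lam a' b) : a = a' := by
  obtain ⟨i, j, hb, hla, hlb⟩ := h
  obtain ⟨i', j', hb', hla', hlb'⟩ := h'
  obtain ⟨hi, hj⟩ := label_inj lam hb hb' (hlb.trans hlb'.symm)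
  subst hi
  have : j = j' := by omega
  subst this
  omega

lemma rightNbr_right_unique (lam : List ℕ) {a b b' : ℕ} (h : RightNbr lam a b)
    (h' : RightNbr lam a b') : b = b' := by
  obtain ⟨i, j, hb, hla, hlb⟩ := h
  obtain ⟨i', j', hb', hla', hlb'⟩ := h'
  have hbox : IsBox lam i j := ⟨hb.1, Nat.lt_trans (Nat.lt_succ_self j) hb.2⟩
  have hbox' : IsBox lam i' j' := ⟨hb'.1, Nat.lt_trans (Nat.lt_succ_self j') hb'.2⟩
  obtain ⟨hi, hj⟩ := label_inj lam hbox hbox' (hla.trans hla'.symm)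
  subst hi; subst hj
  omega

lemma rightNbr_lt_left (lam : List ℕ) {a b : ℕ} (h : RightNbr lam a b) : a < lam.sum := by
  obtain ⟨i, j, hb, hla, _⟩ := h
  have hbox : IsBox lam i j := ⟨hb.1, Nat.lt_trans (Nat.lt_succ_self j) hb.2⟩
  have := label_le_sum lam hbox
  omega

lemma rightNbr_lt_right (lam : List ℕ) {a b : ℕ} (h : RightNbr lam a b) : b < lam.sum := by
  obtain ⟨i, j, hb, _, hlb⟩ := h
  have := label_le_sum lam hb
  omega

def chainR (lam : List ℕ) : ℕ → ℕ → ℕ → Prop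
  | 0, a, b => a = b
  | m + 1, a, b => ∃ c, RightNbr lam a c ∧ chainR lam m c b

lemma chain_box (lam : List ℕ) {m a b i j : ℕ} (hb : IsBox lam i j)
    (hl : baseLabel lam i j = a + 1) (hc : chainR lam m a b) :
    IsBox lam i (j + m) ∧ baseLabel lam i (j + m) = b + 1 := by
  induction m generalizing a j with
  | zero =>
    simp only [chainR] at hc
    subst hc
    simpa using ⟨hb, hl⟩
  | succ m ih =>
    simp only [chainR] at hc
    obtain ⟨c, ⟨i', j', hb', hla, hlc⟩, hc'⟩ := hc
    have hbox' : IsBox lam i' j' := ⟨hb'.1, Nat.lt_trans (Nat.lt_succ_self j') hb'.2⟩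
    obtain ⟨hi, hj⟩ := label_inj lam hb hbox' (hl.trans hla.symm)
    subst hi; subst hj
    have := ih hb' hlc hc'
    have heq : j + 1 + m = j + (m + 1) := by omega
    rwa [heq] at this

lemma chain_start_box (lam : List ℕ) {m a b : ℕ} (hc : chainR lam (m + 1) a b) :
    ∃ i j, IsBox lam i j ∧ baseLabel lam i j = a + 1 := by
  simp only [chainR] at hc
  obtain ⟨c, ⟨i, j, hb, hla, _⟩, _⟩ := hc
  exact ⟨i, j, ⟨hb.1, Nat.lt_trans (Nat.lt_succ_self j) hb.2⟩, hla⟩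

lemma chain_lt_left (lam : List ℕ) {m a b : ℕ} (hc : chainR lam m a b) (hb : b < lam.sum) :
    a < lam.sum := by
  cases m with
  | zero => simp only [chainR] at hc; omega
  | succ m =>
    obtain ⟨i, j, hbox, hl⟩ := chain_start_box lam hc
    have := label_le_sum lam hbox
    omega

lemma chain_lt_right (lam : List ℕ) {m a b : ℕ} (hc : chainR lam m a b) (ha : a < lam.sum) :
    b < lam.sum := by
  cases m with
  | zero => simp only [chainR] at hc; omega
  | succ m =>
    obtain ⟨i, j, hbox, hl⟩ := chain_start_box lam hc
    have := chain_box lam hbox hl hc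
    have := label_le_sum lam this.1
    omega

lemma no_chain_full (lam : List ℕ) {n : ℕ} (hn : lam.sum = n) (c : ℕ) (u : Fin n) :
    ¬ chainR lam n c (u : ℕ) := by
  intro h
  cases n with
  | zero => exact u.elim0
  | succ N =>
    obtain ⟨i, j, hbox, hl⟩ := chain_start_box lam h
    have h2 := chain_box lam hbox hl h
    have h3 := h2.1.2
    have h4 := getD_le_sum lam i
    omega

end Stmt12Aux


section MatrixAux

variable {n : ℕ} (lam : List ℕ)

lemma sum_mulVec {ι : Type*} (s : Finset ι) (A : ι → Matrix (Fin n) (Fin n) ℂ) (v : Fin n → ℂ) :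
    (∑ i ∈ s, A i).mulVec v = ∑ i ∈ s, (A i).mulVec v := by
  ext y
  simp only [Matrix.mulVec, dotProduct, Finset.sum_apply, Matrix.sum_apply,
    Finset.sum_mul]
  rw [Finset.sum_comm]

lemma mulVec_sum {ι : Type*} (s : Finset ι) (A : Matrix (Fin n) (Fin n) ℂ) (f : ι → Fin n → ℂ) :
    A.mulVec (∑ i ∈ s, f i) = ∑ i ∈ s, A.mulVec (f i) := by
  ext y
  simp only [Matrix.mulVec, dotProduct, Finset.sum_apply, Finset.mul_sum]
  rw [Finset.sum_comm]

lemma mulVec_smulc (A : Matrix (Fin n) (Fin n) ℂ) (c : ℂ) (v : Fin n → ℂ) :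
    A.mulVec (c • v) = c • A.mulVec v := by
  ext y
  simp only [Matrix.mulVec, dotProduct, Pi.smul_apply, smul_eq_mul, Finset.mul_sum]
  exact Finset.sum_congr rfl fun b _ => by ring

lemma Xlam_apply (a b : Fin n) :
    Xlam n lam a b = if RightNbr lam (a : ℕ) (b : ℕ) then 1 else 0 := rfl

lemma stdBasis_mulVec (p q : Fin n) (u : Fin n → ℂ) :
    (Matrix.single p q (1:ℂ)).mulVec u = u q • (Pi.single p 1 : Fin n → ℂ) := by
  ext y
  simp [Matrix.mulVec, dotProduct, Matrix.single, ite_and, Pi.single_apply]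
  rcases eq_or_ne y p with h | h
  · simp [h]
  · simp [h, Ne.symm h]

lemma X_single {a b : Fin n} (h : RightNbr lam (a:ℕ) (b:ℕ)) :
    (Xlam n lam).mulVec (Pi.single b 1) = Pi.single a 1 := by
  funext y
  simp only [Matrix.mulVec_single_one, Matrix.col_apply, Xlam_apply, mul_one]
  rcases eq_or_ne y a with rfl | hy
  · rw [if_pos h, Pi.single_eq_same]
  · rw [if_neg (fun hc => hy (Fin.ext (Stmt12Aux.rightNbr_left_unique lam hc h))),
      Pi.single_eq_of_ne hy]

lemma X_single_zero {b : Fin n} (h : ∀ a : ℕ, ¬ RightNbr lam a (b:ℕ)) :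
    (Xlam n lam).mulVec (Pi.single b 1) = 0 := by
  funext y
  simp only [Matrix.mulVec_single_one, Matrix.col_apply, Xlam_apply, mul_one, Pi.zero_apply]
  rw [if_neg (h y)]

lemma Xt_single {a b : Fin n} (h : RightNbr lam (a:ℕ) (b:ℕ)) :
    (Xlam n lam)ᵀ.mulVec (Pi.single a 1) = Pi.single b 1 := by
  funext y
  simp only [Matrix.mulVec_single_one, Matrix.col_apply, Matrix.transpose_apply, Xlam_apply, mul_one]
  rcases eq_or_ne y b with rfl | hy
  · rw [if_pos h, Pi.single_eq_same]
  · rw [if_neg (fun hc => hy (Fin.ext (Stmt12Aux.rightNbr_right_unique lam hc h))),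
      Pi.single_eq_of_ne hy]

lemma Xt_single_zero {a : Fin n} (h : ∀ b : ℕ, ¬ RightNbr lam (a:ℕ) b) :
    (Xlam n lam)ᵀ.mulVec (Pi.single a 1) = 0 := by
  funext y
  simp only [Matrix.mulVec_single_one, Matrix.col_apply, Matrix.transpose_apply, Xlam_apply, mul_one, Pi.zero_apply]
  rw [if_neg (h y)]

open Stmt12Aux in
lemma Xpow_single (hn : lam.sum = n) {m : ℕ} {a b : Fin n}
    (h : chainR lam m (a:ℕ) (b:ℕ)) :
    ((Xlam n lam) ^ m).mulVec (Pi.single b 1) = Pi.single a 1 := by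
  induction m generalizing a with
  | zero =>
    simp only [chainR] at h
    have hab : a = b := Fin.ext h
    subst hab
    rw [pow_zero, Matrix.one_mulVec]
  | succ m ih =>
    simp only [chainR] at h
    obtain ⟨c, hac, hcb⟩ := h
    have hcn : c < n := by have := rightNbr_lt_right lam hac; omega
    rw [pow_succ', ← Matrix.mulVec_mulVec, ih (a := ⟨c, hcn⟩) hcb]
    exact X_single lam hac

open Stmt12Aux in
lemma Xpow_single_zero (hn : lam.sum = n) {m : ℕ} {b : Fin n}
    (h : ∀ a : ℕ, ¬ chainR lam m a (b:ℕ)) :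
    ((Xlam n lam) ^ m).mulVec (Pi.single b 1) = 0 := by
  induction m with
  | zero => exact absurd rfl (h b)
  | succ m ih =>
    rw [pow_succ', ← Matrix.mulVec_mulVec]
    by_cases hc : ∃ c : ℕ, chainR lam m c (b:ℕ)
    · obtain ⟨c, hcb⟩ := hc
      have hcn : c < n := by
        have := chain_lt_left lam hcb (by rw [hn]; exact b.isLt); omega
      rw [Xpow_single lam hn (a := ⟨c, hcn⟩) hcb]
      exact X_single_zero lam (fun a ha => h a ⟨c, ha, hcb⟩)
    · push_neg at hc
      rw [ih hc, Matrix.mulVec_zero]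

open Stmt12Aux in
lemma Xtpow_single (hn : lam.sum = n) {m : ℕ} {a b : Fin n}
    (h : chainR lam m (a:ℕ) (b:ℕ)) :
    (((Xlam n lam)ᵀ) ^ m).mulVec (Pi.single a 1) = Pi.single b 1 := by
  induction m generalizing a with
  | zero =>
    simp only [chainR] at h
    have hab : a = b := Fin.ext h
    subst hab
    rw [pow_zero, Matrix.one_mulVec]
  | succ m ih =>
    simp only [chainR] at h
    obtain ⟨c, hac, hcb⟩ := h
    have hcn : c < n := by have := rightNbr_lt_right lam hac; omega
    rw [pow_succ, ← Matrix.mulVec_mulVec, Xt_single lam (b := ⟨c, hcn⟩) hac,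
      ih (a := ⟨c, hcn⟩) hcb]

open Stmt12Aux in
lemma Xtpow_single_zero (hn : lam.sum = n) {m : ℕ} {a : Fin n}
    (h : ∀ b : ℕ, ¬ chainR lam m (a:ℕ) b) :
    (((Xlam n lam)ᵀ) ^ m).mulVec (Pi.single a 1) = 0 := by
  induction m generalizing a with
  | zero => exact absurd rfl (h a)
  | succ m ih =>
    rw [pow_succ, ← Matrix.mulVec_mulVec]
    by_cases hc : ∃ c : ℕ, RightNbr lam (a:ℕ) c
    · obtain ⟨c, hac⟩ := hc
      have hcn : c < n := by have := rightNbr_lt_right lam hac; omega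
      rw [Xt_single lam (b := ⟨c, hcn⟩) hac]
      exact ih (a := ⟨c, hcn⟩) (fun b hb => h b ⟨c, hac, hb⟩)
    · push_neg at hc
      rw [Xt_single_zero lam hc, Matrix.mulVec_zero]

open Stmt12Aux in
lemma S_mulVec (hn : lam.sum = n) (p q v : Fin n) :
    (∑ m ∈ Finset.range n,
        (Xlam n lam) ^ m * Matrix.single p q (1 : ℂ) * ((Xlam n lam)ᵀ) ^ m).mulVec
      (Pi.single v 1)
    = ∑ m ∈ Finset.range n, (if chainR lam m (v:ℕ) (q:ℕ)
        then ((Xlam n lam) ^ m).mulVec (Pi.single p 1) else 0) := by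
  rw [_root_.sum_mulVec]
  refine Finset.sum_congr rfl fun m _ => ?_
  rw [← Matrix.mulVec_mulVec, ← Matrix.mulVec_mulVec]
  by_cases hch : chainR lam m (v:ℕ) (q:ℕ)
  · rw [Xtpow_single lam hn hch, stdBasis_mulVec, Pi.single_eq_same, one_smul, if_pos hch]
  · rw [if_neg hch]
    by_cases hb : ∃ b : ℕ, chainR lam m (v:ℕ) b
    · obtain ⟨b, hbb⟩ := hb
      have hbn : b < n := by
        have := chain_lt_right lam hbb (by rw [hn]; exact v.isLt); omega
      rw [Xtpow_single lam hn (b := ⟨b, hbn⟩) hbb, stdBasis_mulVec]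
      have hne : q ≠ (⟨b, hbn⟩ : Fin n) := by
        intro hq
        exact hch (by rw [show (q:ℕ) = b from congrArg Fin.val hq]; exact hbb)
      rw [Pi.single_eq_of_ne hne, zero_smul, Matrix.mulVec_zero]
    · push_neg at hb
      rw [Xtpow_single_zero lam hn hb, Matrix.mulVec_zero, Matrix.mulVec_zero]

open Stmt12Aux in
lemma KL1 (hn : lam.sum = n) {a v : Fin n} (hav : RightNbr lam (a:ℕ) (v:ℕ)) (t u : Fin n) :
    (∑ m ∈ Finset.range n, if chainR lam m (a:ℕ) (t:ℕ)
        then ((Xlam n lam) ^ m).mulVec (Pi.single u 1) else 0)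
      - (Xlam n lam).mulVec (∑ m ∈ Finset.range n, if chainR lam m (v:ℕ) (t:ℕ)
        then ((Xlam n lam) ^ m).mulVec (Pi.single u 1) else 0)
    = if (a:ℕ) = (t:ℕ) then Pi.single u 1 else 0 := by
  rw [_root_.mulVec_sum]
  have hX : ∀ m : ℕ, (Xlam n lam).mulVec (if chainR lam m (v:ℕ) (t:ℕ)
      then ((Xlam n lam) ^ m).mulVec (Pi.single u 1) else 0)
      = if chainR lam m (v:ℕ) (t:ℕ)
        then ((Xlam n lam) ^ (m+1)).mulVec (Pi.single u 1) else 0 := by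
    intro m
    split_ifs with h
    · rw [Matrix.mulVec_mulVec, ← pow_succ']
    · exact Matrix.mulVec_zero _
  simp only [hX]
  have hrange : Finset.range n = Finset.range ((n - 1) + 1) := by
    congr 1
    have : 0 < n := Nat.pos_of_ne_zero (by rintro rfl; exact a.elim0)
    omega
  rw [hrange, Finset.sum_range_succ', Finset.sum_range_succ]
  have hterm : ∀ m : ℕ, (if chainR lam (m+1) (a:ℕ) (t:ℕ)
      then ((Xlam n lam) ^ (m+1)).mulVec (Pi.single u 1) else 0)
      = (if chainR lam m (v:ℕ) (t:ℕ)
        then ((Xlam n lam) ^ (m+1)).mulVec (Pi.single u 1) else 0) := by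
    intro m
    apply if_congr _ rfl rfl
    constructor
    · rintro ⟨c, hac, hcb⟩
      have hc : c = (v:ℕ) := rightNbr_right_unique lam hac hav
      rwa [hc] at hcb
    · intro hcb; exact ⟨(v:ℕ), hav, hcb⟩
  simp only [hterm]
  have hlast : (if chainR lam (n-1) (v:ℕ) (t:ℕ)
      then ((Xlam n lam) ^ ((n-1)+1)).mulVec (Pi.single u 1) else 0) = 0 := by
    split_ifs with h
    · have he : (n - 1) + 1 = n := by
        have : 0 < n := Nat.pos_of_ne_zero (by rintro rfl; exact a.elim0)
        omega
      rw [he]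
      exact Xpow_single_zero lam hn (fun c hc => no_chain_full lam hn c u hc)
    · rfl
  rw [hlast]
  have hzero : (if chainR lam 0 (a:ℕ) (t:ℕ)
      then ((Xlam n lam) ^ 0).mulVec (Pi.single u 1) else 0)
      = if (a:ℕ) = (t:ℕ) then Pi.single u 1 else 0 := by
    simp only [chainR, pow_zero, Matrix.one_mulVec]
  rw [hzero]
  abel

end MatrixAux

/-- the commutator `g_k X_λ - X_λ g_k` sends `e_{w(j)}` to `x ℓ • e_{w(k)}` if `j`
is the entry directly right of `ℓ` in `R(w)` for a Springer inversion `(k,ℓ)`, and to `0`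
otherwise; in particular `g_n` commutes with `X_λ`. -/
theorem stmt12 (n : ℕ) (lam : List ℕ) (hn : lam.sum = n)
    (w : Equiv.Perm (Fin n)) (hrs : RowStrictT n lam w)
    (k : Fin n) (hk : 1 ≤ (k : ℕ))
    (x : Fin n → ℂ) (hx : ∀ ℓ, ¬ SpringerInvT n lam w k ℓ → x ℓ = 0) :
    (∀ j ℓ : Fin n, SpringerInvT n lam w k ℓ → RightNbr lam (w ℓ : ℕ) (w j : ℕ) →
      (BkMat n lam w k x * Xlam n lam - Xlam n lam * BkMat n lam w k x).mulVec
          (Pi.single (w j) 1) =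
        x ℓ • (Pi.single (w k) 1 : Fin n → ℂ)) ∧
    (∀ j : Fin n,
      (∀ ℓ : Fin n, SpringerInvT n lam w k ℓ → ¬ RightNbr lam (w ℓ : ℕ) (w j : ℕ)) →
      (BkMat n lam w k x * Xlam n lam - Xlam n lam * BkMat n lam w k x).mulVec
          (Pi.single (w j) 1) = 0) ∧
    ((k : ℕ) + 1 = n →
      BkMat n lam w k x * Xlam n lam = Xlam n lam * BkMat n lam w k x) := by
  have hn1 : 0 < n := Nat.pos_of_ne_zero (by rintro rfl; exact k.elim0)
  set NN : Matrix (Fin n) (Fin n) ℂ := (∑ ℓ : Fin n, if SpringerInvT n lam w k ℓ then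
      x ℓ • (∑ m ∈ Finset.range n,
        (Xlam n lam) ^ m * Matrix.single (w k) (w ℓ) (1 : ℂ) * ((Xlam n lam)ᵀ) ^ m)
    else 0) with hNN
  have hB : BkMat n lam w k x = 1 + NN := by rw [hNN]; rfl
  have hcomm : BkMat n lam w k x * Xlam n lam - Xlam n lam * BkMat n lam w k x
      = NN * Xlam n lam - Xlam n lam * NN := by
    rw [hB]; noncomm_ring
  have hNapp : ∀ v : Fin n, NN.mulVec (Pi.single v 1) =
      ∑ ℓ : Fin n, (if SpringerInvT n lam w k ℓ then
        x ℓ • (∑ m ∈ Finset.range n, if Stmt12Aux.chainR lam m (v:ℕ) ((w ℓ):ℕ)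
          then ((Xlam n lam) ^ m).mulVec (Pi.single (w k) 1) else 0) else 0) := by
    intro v
    rw [hNN, _root_.sum_mulVec]
    refine Finset.sum_congr rfl fun ℓ _ => ?_
    split_ifs with hs
    · rw [Matrix.smul_mulVec, S_mulVec lam hn]
    · exact Matrix.zero_mulVec _
  have hcaseA : ∀ (j a : Fin n), RightNbr lam (a:ℕ) ((w j):ℕ) →
      (NN * Xlam n lam - Xlam n lam * NN).mulVec (Pi.single (w j) 1)
      = ∑ ℓ : Fin n, (if SpringerInvT n lam w k ℓ then
          x ℓ • (if (a:ℕ) = ((w ℓ):ℕ) then (Pi.single (w k) 1 : Fin n → ℂ) else 0)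
        else 0) := by
    intro j a ha
    rw [Matrix.sub_mulVec, ← Matrix.mulVec_mulVec, ← Matrix.mulVec_mulVec,
      X_single lam ha, hNapp, hNapp, _root_.mulVec_sum, ← Finset.sum_sub_distrib]
    refine Finset.sum_congr rfl fun ℓ _ => ?_
    by_cases hs : SpringerInvT n lam w k ℓ
    · rw [if_pos hs, if_pos hs, if_pos hs, mulVec_smulc, ← smul_sub,
        KL1 lam hn ha (w ℓ) (w k)]
    · rw [if_neg hs, if_neg hs, if_neg hs, Matrix.mulVec_zero, sub_zero]
  have part2 : ∀ j : Fin n,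
      (∀ ℓ : Fin n, SpringerInvT n lam w k ℓ → ¬ RightNbr lam (w ℓ : ℕ) (w j : ℕ)) →
      (BkMat n lam w k x * Xlam n lam - Xlam n lam * BkMat n lam w k x).mulVec
          (Pi.single (w j) 1) = 0 := by
    intro j hno
    rw [hcomm]
    by_cases hA : ∃ a : ℕ, RightNbr lam a ((w j):ℕ)
    · obtain ⟨a, ha⟩ := hA
      have han : a < n := by have := Stmt12Aux.rightNbr_lt_left lam ha; omega
      rw [hcaseA j ⟨a, han⟩ ha]
      apply Finset.sum_eq_zero
      intro ℓ _
      split_ifs with h1 h2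
      · exfalso
        apply hno ℓ h1
        have hr : RightNbr lam ((w ℓ : Fin n):ℕ) ((w j):ℕ) := by
          rw [← h2]; exact ha
        exact hr
      · exact smul_zero _
      · rfl
    · push_neg at hA
      rw [Matrix.sub_mulVec, ← Matrix.mulVec_mulVec, ← Matrix.mulVec_mulVec,
        X_single_zero lam hA, Matrix.mulVec_zero, hNapp, _root_.mulVec_sum, zero_sub, neg_eq_zero]
      apply Finset.sum_eq_zero
      intro ℓ _
      split_ifs with hs
      · rw [mulVec_smulc, _root_.mulVec_sum]
        have hsum0 : (∑ m ∈ Finset.range n, (Xlam n lam).mulVec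
            (if Stmt12Aux.chainR lam m (((w j):Fin n):ℕ) ((w ℓ):ℕ)
              then ((Xlam n lam) ^ m).mulVec (Pi.single (w k) 1) else 0)) = 0 := by
          apply Finset.sum_eq_zero
          intro m _
          split_ifs with hch
          · rw [Matrix.mulVec_mulVec, ← pow_succ']
            apply Xpow_single_zero lam hn
            intro c hc
            simp only [SpringerInvT, HessInvT] at hs
            obtain ⟨hlk, ik, jk, il, jl, hbk, hbl, hlabk, hlabl, hjord, hcond⟩ := hs
            have hbox0 : ∃ i0 j0, IsBox lam i0 j0 ∧
                baseLabel lam i0 j0 = ((w j):ℕ) + 1 := by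
              cases m with
              | zero =>
                simp only [Stmt12Aux.chainR] at hch
                exact ⟨il, jl, hbl, by rw [hlabl, hch]⟩
              | succ m' => exact Stmt12Aux.chain_start_box lam hch
            obtain ⟨i0, j0, hb0, hl0⟩ := hbox0
            have hj0 : j0 = 0 := by
              by_contra hj0ne
              obtain ⟨j', rfl⟩ : ∃ j', j0 = j' + 1 := ⟨j0 - 1, by omega⟩
              have hbox' : IsBox lam i0 j' := ⟨hb0.1, by have := hb0.2; omega⟩
              have h1le := Stmt12Aux.label_one_le lam hbox'
              exact hA (baseLabel lam i0 j' - 1) ⟨i0, j', hb0, by omega, hl0⟩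
            subst hj0
            have hwl := Stmt12Aux.chain_box lam hb0 hl0 hch
            rw [Nat.zero_add] at hwl
            obtain ⟨heqi, heqj⟩ :=
              Stmt12Aux.label_inj lam hbl hwl.1 (hlabl.trans hwl.2.symm)
            obtain ⟨ic, jc, hbc, hlc⟩ := Stmt12Aux.chain_start_box lam hc
            have hwk := Stmt12Aux.chain_box lam hbc hlc hc
            obtain ⟨heqi', heqj'⟩ :=
              Stmt12Aux.label_inj lam hbk hwk.1 (hlabk.trans hwk.2.symm)
            omega
          · exact Matrix.mulVec_zero _
        rw [hsum0, smul_zero]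
      · exact Matrix.mulVec_zero _
  refine ⟨?_, part2, ?_⟩
  · intro j ℓ0 hspr hrn
    rw [hcomm, hcaseA j (w ℓ0) hrn]
    rw [Finset.sum_eq_single ℓ0]
    · rw [if_pos hspr, if_pos rfl]
    · intro ℓ _ hne
      by_cases hs : SpringerInvT n lam w k ℓ
      · rw [if_pos hs, if_neg (fun he => hne (w.injective (Fin.ext he)).symm), smul_zero]
      · rw [if_neg hs]
    · intro hmem
      exact absurd (Finset.mem_univ ℓ0) hmem
  · intro hkn
    have hz : ∀ b : Fin n, (BkMat n lam w k x * Xlam n lam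
        - Xlam n lam * BkMat n lam w k x).mulVec (Pi.single b 1) = 0 := by
      intro b
      have hb' := part2 (w.symm b) ?_
      · rwa [Equiv.apply_symm_apply] at hb'
      · intro ℓ hspr hrn
        simp only [SpringerInvT, HessInvT] at hspr
        obtain ⟨hlk, ik, jk, il, jl, hbk, hbl, hlabk, hlabl, hjord, hcond⟩ := hspr
        obtain ⟨i, j0, hbr, hla, hlb⟩ := hrn
        have hbox : IsBox lam i j0 := ⟨hbr.1, Nat.lt_trans (Nat.lt_succ_self j0) hbr.2⟩
        obtain ⟨hi, hj⟩ := Stmt12Aux.label_inj lam hbl hbox (hlabl.trans hla.symm)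
        have hcnd := hcond (w.symm b) (by rw [hi, hj]; exact hbr)
          (by rw [hi, hj]; exact hlb.symm)
        have hlt := (w.symm b).isLt
        omega
    have hmat : BkMat n lam w k x * Xlam n lam - Xlam n lam * BkMat n lam w k x = 0 := by
      ext a b
      have h := congrFun (hz b) a
      simpa [Matrix.mulVec_single] using h
    exact sub_eq_zero.mp hmat
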